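/- Let y > 0 satisfy μ̄(y) > 0 and n([y,∞)) > 0. Then the dual Hardy–Littlewood function of μ relative to n is finite at y, with the explicit bound ψ_μ(y) ≤ n([y,∞))⁻¹ · ( (1 − μ̄(y))/μ̄(y) − log μ̄(y) ). -/

import Mathlib

open MeasureTheory Filter
open scoped ENNReal Topology Classical

/-- Topological support of a Borel measure on ℝ. -/
def measSupport (μ : MeasureTheory.Measure ℝ) : Set ℝ :=
  {x | ∀ U : Set ℝ, IsOpen U → x ∈ U → 0 < μ U}

/-- The dual Hardy–Littlewood function `ψ_μ` of `μ` relative to `n`: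
`ψ_μ(y) = ∫_{(0,y)} 1_{μ({s})=0} [μ̄(s)·n([s,∞))]⁻¹ dμ(s)
          + Σ_{0<s<y, μ({s})>0} log(μ̄(s)/μ̄(s+)) / n([s,∞))`,
with values in `[0,∞]` (and `ψ_μ(y) = 0` for `y ≤ 0`). -/
noncomputable def dualHL (μ n : MeasureTheory.Measure ℝ) (y : ℝ) : ℝ≥0∞ :=
  (∫⁻ s in Set.Ioo (0 : ℝ) y,
      Set.indicator {t : ℝ | μ {t} = 0}
        (fun t => (μ (Set.Ici t) * n (Set.Ici t))⁻¹) s ∂μ)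
  + ∑' s : {t : ℝ // 0 < t ∧ t < y ∧ 0 < μ {t}},
      ENNReal.ofReal
          (Real.log ((μ (Set.Ici (s : ℝ))).toReal / (μ (Set.Ioi (s : ℝ))).toReal))
        / n (Set.Ici (s : ℝ))

/-- If `y > 0`, `μ̄(y) > 0` and `n([y,∞)) > 0`, then the dual
Hardy–Littlewood function of `μ` relative to `n` is finite at `y`, with the explicit
bound `ψ_μ(y) ≤ n([y,∞))⁻¹ · ((1 − μ̄(y))/μ̄(y) − log μ̄(y))`. -/
theorem dualHL_finite_with_bound
    (μ n : MeasureTheory.Measure ℝ) [MeasureTheory.IsProbabilityMeasure μ]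
    (hμpos : μ (Set.Ioi (0 : ℝ)) = 1)
    (hnfin : ∀ s : ℝ, 0 < s → n (Set.Ici s) < ⊤)
    (hnsupp : ∀ y ∈ measSupport μ, 0 < n (Set.Ici y))
    (y : ℝ) (hy : 0 < y)
    (hμy : 0 < μ (Set.Ici y)) (hny : 0 < n (Set.Ici y)) :
    dualHL μ n y < ⊤ ∧
      dualHL μ n y ≤
        (n (Set.Ici y))⁻¹ *
          ENNReal.ofReal
            ((1 - (μ (Set.Ici y)).toReal) / (μ (Set.Ici y)).toReal
              - Real.log (μ (Set.Ici y)).toReal) := by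
  classical
  set a := μ (Set.Ici y) with ha_def
  have ha_ne_top : a ≠ ⊤ := (measure_lt_top μ _).ne
  set A : ℝ := a.toReal with hA_def
  have hA_pos : 0 < A := ENNReal.toReal_pos hμy.ne' ha_ne_top
  have hA_le_one : A ≤ 1 := by
    have h1 : a ≤ 1 := prob_le_one
    calc A = a.toReal := rfl
      _ ≤ (1 : ℝ≥0∞).toReal := ENNReal.toReal_mono ENNReal.one_ne_top h1
      _ = 1 := by simp
  have hny_ne_top : n (Set.Ici y) ≠ ⊤ := (hnfin y hy).ne
  -- the telescoping real lemma
  have key : ∀ (F : Finset ℝ) (z : ℝ), 0 < μ (Set.Ici z) → (∀ s ∈ F, 0 < s ∧ s < z) →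
      (∑ s ∈ F, (Real.log (μ (Set.Ici s)).toReal - Real.log (μ (Set.Ioi s)).toReal))
        ≤ - Real.log (μ (Set.Ici z)).toReal := by
    intro F
    induction F using Finset.induction_on_max with
    | empty =>
      intro z hz _
      simp only [Finset.sum_empty]
      have : Real.log (μ (Set.Ici z)).toReal ≤ 0 := by
        apply Real.log_nonpos ENNReal.toReal_nonneg
        calc (μ (Set.Ici z)).toReal ≤ (1 : ℝ≥0∞).toReal :=
              ENNReal.toReal_mono ENNReal.one_ne_top prob_le_one
          _ = 1 := by simp
      linarith
    | insert b s hmax ih =>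
      intro z hz hmem
      have hb_notmem : b ∉ s := fun h => lt_irrefl b (hmax b h)
      rw [Finset.sum_insert hb_notmem]
      have hbz : b < z := (hmem b (Finset.mem_insert_self b s)).2
      have hIcib : 0 < μ (Set.Ici b) :=
        lt_of_lt_of_le hz (measure_mono (Set.Ici_subset_Ici.mpr hbz.le))
      have hIoib : 0 < μ (Set.Ioi b) :=
        lt_of_lt_of_le hz (measure_mono (fun x hx => lt_of_lt_of_le hbz hx))
      have hih := ih b hIcib (fun x hx =>
        ⟨(hmem x (Finset.mem_insert_of_mem hx)).1, hmax x hx⟩)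
      have hlog : Real.log (μ (Set.Ici z)).toReal ≤ Real.log (μ (Set.Ioi b)).toReal := by
        apply Real.log_le_log (ENNReal.toReal_pos hz.ne' (measure_lt_top μ _).ne)
        exact ENNReal.toReal_mono (measure_lt_top μ _).ne
          (measure_mono (fun x hx => lt_of_lt_of_le hbz hx))
      linarith
  -- bound on the sum term
  set f : {t : ℝ // 0 < t ∧ t < y ∧ 0 < μ {t}} → ℝ≥0∞ := fun s =>
    ENNReal.ofReal
      (Real.log ((μ (Set.Ici (s : ℝ))).toReal / (μ (Set.Ioi (s : ℝ))).toReal)) with hf_def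
  have hterm : ∀ s : {t : ℝ // 0 < t ∧ t < y ∧ 0 < μ {t}},
      Real.log ((μ (Set.Ici (s : ℝ))).toReal / (μ (Set.Ioi (s : ℝ))).toReal)
        = Real.log (μ (Set.Ici (s : ℝ))).toReal - Real.log (μ (Set.Ioi (s : ℝ))).toReal := by
    intro s
    have hIoi : 0 < μ (Set.Ioi (s : ℝ)) :=
      lt_of_lt_of_le hμy (measure_mono (fun x hx => lt_of_lt_of_le s.2.2.1 hx))
    have hIci : 0 < μ (Set.Ici (s : ℝ)) :=
      lt_of_lt_of_le hIoi (measure_mono Set.Ioi_subset_Ici_self)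
    exact Real.log_div (ENNReal.toReal_pos hIci.ne' (measure_lt_top μ _).ne).ne'
      (ENNReal.toReal_pos hIoi.ne' (measure_lt_top μ _).ne).ne'
  have hterm_nonneg : ∀ s : {t : ℝ // 0 < t ∧ t < y ∧ 0 < μ {t}},
      0 ≤ Real.log ((μ (Set.Ici (s : ℝ))).toReal / (μ (Set.Ioi (s : ℝ))).toReal) := by
    intro s
    rw [hterm s]
    have hIoi : 0 < μ (Set.Ioi (s : ℝ)) :=
      lt_of_lt_of_le hμy (measure_mono (fun x hx => lt_of_lt_of_le s.2.2.1 hx))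
    have h := Real.log_le_log (ENNReal.toReal_pos hIoi.ne' (measure_lt_top μ _).ne)
      (ENNReal.toReal_mono (measure_lt_top μ _).ne (measure_mono Set.Ioi_subset_Ici_self))
    linarith
  have hsum_bound : (∑' s : {t : ℝ // 0 < t ∧ t < y ∧ 0 < μ {t}}, f s)
      ≤ ENNReal.ofReal (- Real.log A) := by
    apply Summable.tsum_le_of_sum_le ENNReal.summable
    intro F
    have hsum_eq : (∑ s ∈ F, f s) = ENNReal.ofReal
        (∑ s ∈ F, Real.log ((μ (Set.Ici (s : ℝ))).toReal / (μ (Set.Ioi (s : ℝ))).toReal)) :=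
      (ENNReal.ofReal_sum_of_nonneg (fun s _ => hterm_nonneg s)).symm
    rw [hsum_eq]
    apply ENNReal.ofReal_le_ofReal
    have : (∑ s ∈ F, Real.log ((μ (Set.Ici (s : ℝ))).toReal / (μ (Set.Ioi (s : ℝ))).toReal))
        = ∑ t ∈ F.image Subtype.val,
            (Real.log (μ (Set.Ici t)).toReal - Real.log (μ (Set.Ioi t)).toReal) := by
      rw [Finset.sum_image (fun x _ x' _ h => Subtype.val_injective h)]
      exact Finset.sum_congr rfl (fun s _ => hterm s)
    rw [this]
    exact key _ y hμy (fun t ht => by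
      obtain ⟨s, _, rfl⟩ := Finset.mem_image.mp ht
      exact ⟨s.2.1, s.2.2.1⟩)
  -- bound on the integral term
  have hint_bound : (∫⁻ s in Set.Ioo (0 : ℝ) y,
      Set.indicator {t : ℝ | μ {t} = 0}
        (fun t => (μ (Set.Ici t) * n (Set.Ici t))⁻¹) s ∂μ)
      ≤ (a * n (Set.Ici y))⁻¹ * μ (Set.Ioo 0 y) := by
    calc (∫⁻ s in Set.Ioo (0 : ℝ) y,
        Set.indicator {t : ℝ | μ {t} = 0}
          (fun t => (μ (Set.Ici t) * n (Set.Ici t))⁻¹) s ∂μ)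
        ≤ ∫⁻ _ in Set.Ioo (0 : ℝ) y, (a * n (Set.Ici y))⁻¹ ∂μ := by
          apply setLIntegral_mono' measurableSet_Ioo
          intro x hx
          refine le_trans (Set.indicator_le_self _ _ x) ?_
          apply ENNReal.inv_le_inv.mpr
          exact mul_le_mul' (measure_mono (Set.Ici_subset_Ici.mpr hx.2.le))
            (measure_mono (Set.Ici_subset_Ici.mpr hx.2.le))
      _ = (a * n (Set.Ici y))⁻¹ * μ (Set.Ioo 0 y) := setLIntegral_const _ _
  -- μ(Ioo 0 y) ≤ 1 - a
  have hIoo_le : μ (Set.Ioo 0 y) ≤ 1 - a := by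
    have hdisj : Disjoint (Set.Ioo (0 : ℝ) y) (Set.Ici y) :=
      Set.disjoint_left.mpr (fun x hx hx' => absurd hx.2 (not_lt.mpr hx'))
    have hunion : μ (Set.Ioo 0 y) + a = μ (Set.Ioo 0 y ∪ Set.Ici y) :=
      (measure_union hdisj measurableSet_Ici).symm
    have hle1 : μ (Set.Ioo 0 y) + a ≤ 1 := by
      rw [hunion]
      exact prob_le_one
    exact ENNReal.le_sub_of_add_le_right ha_ne_top hle1
  have ha_eq : a = ENNReal.ofReal A := (ENNReal.ofReal_toReal ha_ne_top).symm
  have hsub_eq : (1 : ℝ≥0∞) - a = ENNReal.ofReal (1 - A) := by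
    rw [ha_eq, ← ENNReal.ofReal_one, ← ENNReal.ofReal_sub _ hA_pos.le]
  have hinv_eq : a⁻¹ = ENNReal.ofReal A⁻¹ := by
    rw [ha_eq, ENNReal.ofReal_inv_of_pos hA_pos]
  have hmul_inv : (a * n (Set.Ici y))⁻¹ = (n (Set.Ici y))⁻¹ * a⁻¹ := by
    rw [ENNReal.mul_inv (Or.inl hμy.ne') (Or.inl ha_ne_top), mul_comm]
  have hint_bound2 : (∫⁻ s in Set.Ioo (0 : ℝ) y,
      Set.indicator {t : ℝ | μ {t} = 0}
        (fun t => (μ (Set.Ici t) * n (Set.Ici t))⁻¹) s ∂μ)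
      ≤ (n (Set.Ici y))⁻¹ * ENNReal.ofReal ((1 - A) / A) := by
    refine le_trans hint_bound ?_
    rw [hmul_inv, mul_assoc]
    apply mul_le_mul_right ?_ (n (Set.Ici y))⁻¹
    calc a⁻¹ * μ (Set.Ioo 0 y) ≤ a⁻¹ * (1 - a) := mul_le_mul_right hIoo_le a⁻¹
      _ = ENNReal.ofReal A⁻¹ * ENNReal.ofReal (1 - A) := by rw [hinv_eq, hsub_eq]
      _ = ENNReal.ofReal (A⁻¹ * (1 - A)) :=
          (ENNReal.ofReal_mul (inv_nonneg.mpr hA_pos.le)).symm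
      _ = ENNReal.ofReal ((1 - A) / A) := by rw [div_eq_mul_inv, mul_comm]
  -- bound on the sum term with the denominator
  have hsum_bound2 : (∑' s : {t : ℝ // 0 < t ∧ t < y ∧ 0 < μ {t}},
      f s / n (Set.Ici (s : ℝ)))
      ≤ (n (Set.Ici y))⁻¹ * ENNReal.ofReal (- Real.log A) := by
    calc (∑' s : {t : ℝ // 0 < t ∧ t < y ∧ 0 < μ {t}}, f s / n (Set.Ici (s : ℝ)))
        ≤ ∑' s : {t : ℝ // 0 < t ∧ t < y ∧ 0 < μ {t}}, f s / n (Set.Ici y) := by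
          apply ENNReal.tsum_le_tsum
          intro s
          exact ENNReal.div_le_div_left
            (measure_mono (Set.Ici_subset_Ici.mpr s.2.2.1.le)) _
      _ = (∑' s : {t : ℝ // 0 < t ∧ t < y ∧ 0 < μ {t}}, f s) * (n (Set.Ici y))⁻¹ := by
          simp_rw [div_eq_mul_inv]
          exact ENNReal.tsum_mul_right
      _ ≤ ENNReal.ofReal (- Real.log A) * (n (Set.Ici y))⁻¹ :=
          mul_le_mul_left hsum_bound _
      _ = (n (Set.Ici y))⁻¹ * ENNReal.ofReal (- Real.log A) := mul_comm _ _
  -- combine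
  have hbound : dualHL μ n y ≤
      (n (Set.Ici y))⁻¹ * ENNReal.ofReal ((1 - A) / A - Real.log A) := by
    have hX : (0 : ℝ) ≤ (1 - A) / A := div_nonneg (by linarith) hA_pos.le
    have h_add : ENNReal.ofReal ((1 - A) / A - Real.log A)
        = ENNReal.ofReal ((1 - A) / A) + ENNReal.ofReal (- Real.log A) := by
      rw [← ENNReal.ofReal_add hX (by
        have := Real.log_nonpos hA_pos.le hA_le_one; linarith)]
      ring_nf
    rw [h_add, mul_add]
    exact add_le_add hint_bound2 hsum_bound2
  refine ⟨lt_of_le_of_lt hbound ?_, hbound⟩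
  exact ENNReal.mul_lt_top (ENNReal.inv_lt_top.mpr hny) ENNReal.ofReal_lt_top
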